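/- Let R be a ring, P a finitely generated projective R-module, G an R-module, and σ' : P → G a surjective R-linear map. Then the class D_{σ'} of all R-modules M such that every R-linear map P → M factors through σ' is closed under submodules (if M ∈ D_{σ'} and N is a submodule of M, then N ∈ D_{σ'}) and under arbitrary direct sums (if Mᵢ ∈ D_{σ'} for all i ∈ I, then ⊕_{i∈I} Mᵢ ∈ D_{σ'}). -/

import Mathlib

universe u

open DirectSum

/-- `M ∈ D_σ`: every `R`-linear map `A → M` factors through `σ : A → B`. -/
def MemD {R : Type u} [Ring R] {A B : Type u} [AddCommGroup A] [Module R A]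
    [AddCommGroup B] [Module R B] (σ : A →ₗ[R] B)
    (M : Type u) [AddCommGroup M] [Module R M] : Prop :=
  ∀ f : A →ₗ[R] M, ∃ g : B →ₗ[R] M, g.comp σ = f

/-- For `P` finitely generated projective and `σ' : P → G` surjective, the class `D_{σ'}`
is closed under submodules and under arbitrary direct sums. -/
theorem stmt_3 {R : Type u} [Ring R]
    (P G : Type u) [AddCommGroup P] [Module R P] [AddCommGroup G] [Module R G]
    [Module.Finite R P] [Module.Projective R P]
    (σ' : P →ₗ[R] G) (hσ' : Function.Surjective σ') :
    (∀ (M : Type u) [AddCommGroup M] [Module R M] (N : Submodule R M),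
        MemD σ' M → MemD σ' N) ∧
    (∀ (ι : Type u) (Mᵢ : ι → Type u) [∀ i, AddCommGroup (Mᵢ i)] [∀ i, Module R (Mᵢ i)],
        (∀ i, MemD σ' (Mᵢ i)) → MemD σ' (⨁ i, Mᵢ i)) := by
  constructor
  · intro M _ _ N hM f
    obtain ⟨g, hg⟩ := hM (N.subtype.comp f)
    have hrange : ∀ y, g y ∈ N := by
      intro y
      obtain ⟨x, rfl⟩ := hσ' y
      have := LinearMap.congr_fun hg x
      simp only [LinearMap.comp_apply, Submodule.subtype_apply] at this
      rw [this]
      exact (f x).2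
    refine ⟨g.codRestrict N hrange, ?_⟩
    ext x
    have := LinearMap.congr_fun hg x
    simpa using this
  · intro ι Mᵢ _ _ hM f
    classical
    obtain ⟨s, hs⟩ : (⊤ : Submodule R P).FG := Module.Finite.fg_top
    set S : Finset ι := s.sup (fun x => (f x).support) with hS
    choose g hg using fun i => hM i ((DirectSum.component R ι Mᵢ i).comp f)
    have hzero : ∀ i ∉ S, ∀ x : P, (f x) i = 0 := by
      intro i hi x
      have hker : (⊤ : Submodule R P) ≤
          LinearMap.ker ((DirectSum.component R ι Mᵢ i).comp f) := by
        rw [← hs, Submodule.span_le]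
        intro y hy
        simp only [SetLike.mem_coe, LinearMap.mem_ker, LinearMap.comp_apply]
        have hys : i ∉ (f y).support := fun h => hi ((Finset.le_iff_subset.mp (Finset.le_sup (f := fun x : P => (f x).support) hy)) h)
        have : (f y) i = 0 := by
          by_contra hne
          exact hys (DFinsupp.mem_support_iff.mpr hne)
        simpa [← DirectSum.apply_eq_component] using this
      have := hker (Submodule.mem_top (x := x))
      simpa [← DirectSum.apply_eq_component] using this
    refine ⟨∑ i ∈ S, (DirectSum.lof R ι Mᵢ i).comp (g i), ?_⟩
    ext x : 1
    simp only [LinearMap.comp_apply, LinearMap.sum_apply]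
    have hcomp : ∀ i, g i (σ' x) = (f x) i := by
      intro i
      have := LinearMap.congr_fun (hg i) x
      simpa [← DirectSum.apply_eq_component] using this
    have hsupp : (f x).support ⊆ S := by
      intro i hi
      by_contra hiS
      exact (DFinsupp.mem_support_iff.mp hi) (hzero i hiS x)
    calc (∑ i ∈ S, DirectSum.lof R ι Mᵢ i (g i (σ' x)))
        = ∑ i ∈ S, DirectSum.lof R ι Mᵢ i ((f x) i) := by
          refine Finset.sum_congr rfl fun i _ => by rw [hcomp]
      _ = ∑ i ∈ (f x).support, DirectSum.lof R ι Mᵢ i ((f x) i) := by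
          refine (Finset.sum_subset hsupp ?_).symm
          intro i _ hi
          have : (f x) i = 0 := by
            by_contra hne
            exact hi (DFinsupp.mem_support_iff.mpr hne)
          rw [this, map_zero]
      _ = f x := by
          simpa [DirectSum.lof_eq_of] using DirectSum.sum_support_of (f x)
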